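/- For every graph G, there exists a fractional independence weighting φ achieving the fractional independence number α*(G) such that every vertex receives weight 0, 1/2, or 1. -/

import Mathlib

open Finset

/-- A fractional independence weighting of a graph. -/
def IsFIW {V : Type*} (G : SimpleGraph V) (φ : V → ℝ) : Prop :=
  (∀ v, 0 ≤ φ v ∧ φ v ≤ 1) ∧ ∀ u w, G.Adj u w → φ u + φ w ≤ 1

/-- The fractional independence number of a graph. -/
noncomputable def fracIndepNum {V : Type*} [Fintype V] (G : SimpleGraph V) : ℝ :=
  sSup {s : ℝ | ∃ φ : V → ℝ, IsFIW G φ ∧ s = ∑ v, φ v}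

/-- An independent set of a graph. -/
def IsIndepSet {V : Type*} (G : SimpleGraph V) (s : Set V) : Prop :=
  s.Pairwise fun u w => ¬ G.Adj u w

/-- The independence number of a graph. -/
noncomputable def indepNum {V : Type*} [Fintype V] (G : SimpleGraph V) : ℕ :=
  sSup {n : ℕ | ∃ s : Finset V, IsIndepSet G ↑s ∧ s.card = n}

private lemma sum_perturb {V : Type*} [Fintype V] (φ ψ : V → ℝ) (A B : Finset V)
    (hd : Disjoint A B) (ε : ℝ)
    (h1 : ∀ v ∈ A, ψ v = φ v + ε) (h2 : ∀ v ∈ B, ψ v = φ v - ε)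
    (h3 : ∀ v, v ∉ A → v ∉ B → ψ v = φ v) :
    ∑ v, ψ v = (∑ v, φ v) + (ε * A.card - ε * B.card) := by
  classical
  have key : ∑ v, (ψ v - φ v) = ε * A.card - ε * B.card := by
    have hz : ∑ v ∈ A ∪ B, (ψ v - φ v) = ∑ v, (ψ v - φ v) := by
      apply Finset.sum_subset (Finset.subset_univ _)
      intro v _ hv
      rw [Finset.mem_union] at hv
      push_neg at hv
      rw [h3 v hv.1 hv.2]; ring
    rw [← hz, Finset.sum_union hd]
    have hAs : ∑ v ∈ A, (ψ v - φ v) = ε * A.card := by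
      rw [Finset.sum_congr rfl (fun v hv => by rw [h1 v hv]; ring : ∀ v ∈ A, ψ v - φ v = ε)]
      simp [mul_comm]
    have hBs : ∑ v ∈ B, (ψ v - φ v) = -(ε * B.card) := by
      rw [Finset.sum_congr rfl (fun v hv => by rw [h2 v hv]; ring : ∀ v ∈ B, ψ v - φ v = -ε)]
      simp [mul_comm]
    rw [hAs, hBs]; ring
  have hsplit : ∑ v, (ψ v - φ v) = (∑ v, ψ v) - ∑ v, φ v := Finset.sum_sub_distrib _ _
  rw [hsplit] at key
  linarith

private lemma exists_half_integral {V : Type*} [Fintype V] (G : SimpleGraph V) :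
    ∀ (n : ℕ) (φ : V → ℝ), IsFIW G φ →
      (Finset.univ.filter fun v => ¬(φ v = 0 ∨ φ v = 1/2 ∨ φ v = 1)).card ≤ n →
      ∃ ψ : V → ℝ, IsFIW G ψ ∧ (∀ v, ψ v = 0 ∨ ψ v = 1/2 ∨ ψ v = 1) ∧
        ∑ v, φ v ≤ ∑ v, ψ v := by
  classical
  intro n
  induction n with
  | zero =>
    intro φ hφ hc
    refine ⟨φ, hφ, ?_, le_refl _⟩
    intro v
    by_contra hv
    have hmem : v ∈ Finset.univ.filter fun v => ¬(φ v = 0 ∨ φ v = 1/2 ∨ φ v = 1) := by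
      rw [Finset.mem_filter]; exact ⟨Finset.mem_univ v, hv⟩
    have := Finset.card_pos.2 ⟨v, hmem⟩
    omega
  | succ n ih =>
    intro φ hφ hc
    by_cases hle : (Finset.univ.filter fun v => ¬(φ v = 0 ∨ φ v = 1/2 ∨ φ v = 1)).card ≤ n
    · exact ih φ hφ hle
    rw [not_le] at hle
    set A : Finset V := Finset.univ.filter (fun v => 1/2 < φ v ∧ φ v < 1) with hA
    set B : Finset V := Finset.univ.filter (fun v => 0 < φ v ∧ φ v < 1/2) with hB
    have mA : ∀ v, v ∈ A ↔ (1/2 < φ v ∧ φ v < 1) := by intro v; simp [hA]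
    have mB : ∀ v, v ∈ B ↔ (0 < φ v ∧ φ v < 1/2) := by intro v; simp [hB]
    have hd : Disjoint A B := by
      rw [Finset.disjoint_left]
      intro v hvA hvB
      have h1 := (mA v).1 hvA
      have h2 := (mB v).1 hvB
      linarith
    have hABeq : (Finset.univ.filter fun v => ¬(φ v = 0 ∨ φ v = 1/2 ∨ φ v = 1)) = A ∪ B := by
      ext v
      simp only [Finset.mem_filter, Finset.mem_univ, true_and, Finset.mem_union, mA, mB]
      constructor
      · intro h
        push_neg at h
        obtain ⟨h0, h12, h1⟩ := h
        have hb := hφ.1 v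
        rcases lt_or_gt_of_ne h12 with h | h
        · right; exact ⟨lt_of_le_of_ne hb.1 (Ne.symm h0), h⟩
        · left; exact ⟨h, lt_of_le_of_ne hb.2 h1⟩
      · rintro (⟨h1, h2⟩ | ⟨h1, h2⟩) <;> push_neg <;> refine ⟨?_, ?_, ?_⟩ <;> intro hh <;>
          rw [hh] at h1 h2 <;> linarith
    have hne : (A ∪ B).Nonempty := by
      rw [← hABeq, ← Finset.card_pos]; omega
    have notAB : ∀ v, (φ v = 0 ∨ φ v = 1/2 ∨ φ v = 1) → v ∉ A ∪ B := by
      intro v hvh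
      rw [Finset.mem_union, mA, mB]
      rcases hvh with h | h | h <;> rw [h] <;> push_neg <;>
        refine ⟨fun h1 => ?_, fun h1 => ?_⟩ <;> linarith
    by_cases hcard : B.card ≤ A.card
    · -- move A up, B down
      set s : V → ℝ := fun v => if 1/2 < φ v then 1 - φ v else φ v with hs
      set ε := (A ∪ B).inf' hne s with hε
      have hεle : ∀ v ∈ A ∪ B, ε ≤ s v := fun v hv => Finset.inf'_le _ hv
      have hsA : ∀ v ∈ A, ε ≤ 1 - φ v := by
        intro v hv
        have h1 := (mA v).1 hv
        have := hεle v (Finset.mem_union_left _ hv)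
        simp only [hs] at this
        rwa [if_pos h1.1] at this
      have hsB : ∀ v ∈ B, ε ≤ φ v := by
        intro v hv
        have h1 := (mB v).1 hv
        have := hεle v (Finset.mem_union_right _ hv)
        simp only [hs] at this
        rwa [if_neg (by linarith)] at this
      have hεpos : 0 < ε := by
        rw [hε, Finset.lt_inf'_iff]
        intro v hv
        rcases Finset.mem_union.1 hv with h | h
        · have h1 := (mA v).1 h
          simp only [hs]; rw [if_pos h1.1]; linarith
        · have h1 := (mB v).1 h
          simp only [hs]; rw [if_neg (by linarith)]; linarith
      set φ' : V → ℝ := fun v => if v ∈ A then φ v + ε else if v ∈ B then φ v - ε else φ v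
        with hφ'def
      have hmono : ∀ v, v ∉ A → φ' v ≤ φ v := by
        intro v hv
        simp only [hφ'def, if_neg hv]
        split_ifs with h
        · linarith
        · exact le_rfl
      have key : ∀ u w, G.Adj u w → u ∈ A → φ' u + φ' w ≤ 1 := by
        intro u w huw hu
        have h1 := hφ.2 u w huw
        have hu' := (mA u).1 hu
        have hεu := hsA u hu
        by_cases hw : w ∈ A
        · have := (mA w).1 hw; linarith
        · by_cases hwb : w ∈ B
          · have hwB := (mB w).1 hwb
            simp only [hφ'def, if_pos hu, if_neg hw, if_pos hwb]
            linarith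
          · have hw2 : φ w ≤ 0 := by
              by_contra hc2
              push_neg at hc2
              exact hwb ((mB w).2 ⟨hc2, by linarith⟩)
            simp only [hφ'def, if_pos hu, if_neg hw, if_neg hwb]
            linarith
      have edge : ∀ u w, G.Adj u w → φ' u + φ' w ≤ 1 := by
        intro u w huw
        by_cases hu : u ∈ A
        · exact key u w huw hu
        · by_cases hw : w ∈ A
          · have := key w u huw.symm hw; linarith
          · have h1 := hmono u hu
            have h2 := hmono w hw
            have h3 := hφ.2 u w huw
            linarith
      have bdd : ∀ v, 0 ≤ φ' v ∧ φ' v ≤ 1 := by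
        intro v
        have h0 := hφ.1 v
        simp only [hφ'def]
        split_ifs with h1 h2
        · have := hsA v h1; constructor <;> linarith
        · have := hsB v h2; constructor <;> linarith
        · exact h0
      obtain ⟨v₀, hv₀m, hv₀⟩ := Finset.exists_mem_eq_inf' hne s
      have hv₀half : φ' v₀ = 0 ∨ φ' v₀ = 1/2 ∨ φ' v₀ = 1 := by
        rcases Finset.mem_union.1 hv₀m with h | h
        · right; right
          have h1 := (mA v₀).1 h
          simp only [hφ'def, if_pos h]
          rw [hε, hv₀]; simp only [hs]; rw [if_pos h1.1]; ring
        · left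
          have h1 := (mB v₀).1 h
          have hnA : v₀ ∉ A := Finset.disjoint_right.1 hd h
          simp only [hφ'def, if_neg hnA, if_pos h]
          rw [hε, hv₀]; simp only [hs]; rw [if_neg (by linarith)]; ring
      have hsub : (Finset.univ.filter fun v => ¬(φ' v = 0 ∨ φ' v = 1/2 ∨ φ' v = 1))
          ⊆ (Finset.univ.filter fun v => ¬(φ v = 0 ∨ φ v = 1/2 ∨ φ v = 1)) := by
        intro v hv
        simp only [Finset.mem_filter, Finset.mem_univ, true_and] at hv ⊢
        by_contra hvh
        have hvAB := notAB v hvh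
        have hvA : v ∉ A := fun h => hvAB (Finset.mem_union_left _ h)
        have hvB : v ∉ B := fun h => hvAB (Finset.mem_union_right _ h)
        have : φ' v = φ v := by simp only [hφ'def, if_neg hvA, if_neg hvB]
        rw [this] at hv
        exact hv hvh
      have hlt : (Finset.univ.filter fun v => ¬(φ' v = 0 ∨ φ' v = 1/2 ∨ φ' v = 1)).card ≤ n := by
        have hv₀old : v₀ ∈ (Finset.univ.filter fun v => ¬(φ v = 0 ∨ φ v = 1/2 ∨ φ v = 1)) := by
          rw [hABeq]; exact hv₀m
        have hv₀new : v₀ ∉ (Finset.univ.filter fun v => ¬(φ' v = 0 ∨ φ' v = 1/2 ∨ φ' v = 1)) := by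
          simp only [Finset.mem_filter, Finset.mem_univ, true_and, not_not]
          exact hv₀half
        have := Finset.card_lt_card ((Finset.ssubset_iff_of_subset hsub).2 ⟨v₀, hv₀old, hv₀new⟩)
        omega
      obtain ⟨ψ, hψ1, hψ2, hψ3⟩ := ih φ' ⟨bdd, edge⟩ hlt
      refine ⟨ψ, hψ1, hψ2, le_trans ?_ hψ3⟩
      have hsum : ∑ v, φ' v = (∑ v, φ v) + (ε * A.card - ε * B.card) := by
        refine sum_perturb φ φ' A B hd ε ?_ ?_ ?_
        · intro v hv; simp only [hφ'def, if_pos hv]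
        · intro v hv
          simp only [hφ'def, if_neg (Finset.disjoint_right.1 hd hv), if_pos hv]
        · intro v hv1 hv2; simp only [hφ'def, if_neg hv1, if_neg hv2]
      rw [hsum]
      have hcc : (B.card : ℝ) ≤ A.card := Nat.cast_le.2 hcard
      have := mul_le_mul_of_nonneg_left hcc hεpos.le
      linarith
    · -- move A down, B up (toward 1/2)
      push_neg at hcard
      set s : V → ℝ := fun v => if 1/2 < φ v then φ v - 1/2 else 1/2 - φ v with hs
      set ε := (A ∪ B).inf' hne s with hε
      have hεle : ∀ v ∈ A ∪ B, ε ≤ s v := fun v hv => Finset.inf'_le _ hv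
      have hsA : ∀ v ∈ A, ε ≤ φ v - 1/2 := by
        intro v hv
        have h1 := (mA v).1 hv
        have := hεle v (Finset.mem_union_left _ hv)
        simp only [hs] at this
        rwa [if_pos h1.1] at this
      have hsB : ∀ v ∈ B, ε ≤ 1/2 - φ v := by
        intro v hv
        have h1 := (mB v).1 hv
        have := hεle v (Finset.mem_union_right _ hv)
        simp only [hs] at this
        rwa [if_neg (by linarith)] at this
      have hεpos : 0 < ε := by
        rw [hε, Finset.lt_inf'_iff]
        intro v hv
        rcases Finset.mem_union.1 hv with h | h
        · have h1 := (mA v).1 h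
          simp only [hs]; rw [if_pos h1.1]; linarith
        · have h1 := (mB v).1 h
          simp only [hs]; rw [if_neg (by linarith)]; linarith
      set φ' : V → ℝ := fun v => if v ∈ B then φ v + ε else if v ∈ A then φ v - ε else φ v
        with hφ'def
      have hmono : ∀ v, v ∉ B → φ' v ≤ φ v := by
        intro v hv
        simp only [hφ'def, if_neg hv]
        split_ifs with h
        · linarith
        · exact le_rfl
      have key : ∀ u w, G.Adj u w → u ∈ B → φ' u + φ' w ≤ 1 := by
        intro u w huw hu
        have h1 := hφ.2 u w huw
        have hu' := (mB u).1 hu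
        have hεu := hsB u hu
        by_cases hw : w ∈ B
        · have hwB := (mB w).1 hw
          have := hsB w hw
          simp only [hφ'def, if_pos hu, if_pos hw]
          linarith
        · by_cases hwa : w ∈ A
          · have hwA := (mA w).1 hwa
            simp only [hφ'def, if_pos hu, if_neg hw, if_pos hwa]
            linarith
          · have hw2 : φ w ≤ 1/2 := by
              by_contra hc2
              push_neg at hc2
              have hge : 1 ≤ φ w := by
                by_contra hc3
                push_neg at hc3
                exact hwa ((mA w).2 ⟨hc2, hc3⟩)
              linarith
            simp only [hφ'def, if_pos hu, if_neg hw, if_neg hwa]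
            linarith
      have edge : ∀ u w, G.Adj u w → φ' u + φ' w ≤ 1 := by
        intro u w huw
        by_cases hu : u ∈ B
        · exact key u w huw hu
        · by_cases hw : w ∈ B
          · have := key w u huw.symm hw; linarith
          · have h1 := hmono u hu
            have h2 := hmono w hw
            have h3 := hφ.2 u w huw
            linarith
      have bdd : ∀ v, 0 ≤ φ' v ∧ φ' v ≤ 1 := by
        intro v
        have h0 := hφ.1 v
        simp only [hφ'def]
        split_ifs with h1 h2
        · have := hsB v h1; constructor <;> linarith
        · have := hsA v h2; constructor <;> linarith
        · exact h0
      obtain ⟨v₀, hv₀m, hv₀⟩ := Finset.exists_mem_eq_inf' hne s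
      have hv₀half : φ' v₀ = 0 ∨ φ' v₀ = 1/2 ∨ φ' v₀ = 1 := by
        right; left
        rcases Finset.mem_union.1 hv₀m with h | h
        · have h1 := (mA v₀).1 h
          have hnB : v₀ ∉ B := Finset.disjoint_left.1 hd h
          simp only [hφ'def, if_neg hnB, if_pos h]
          rw [hε, hv₀]; simp only [hs]; rw [if_pos h1.1]; ring
        · have h1 := (mB v₀).1 h
          simp only [hφ'def, if_pos h]
          rw [hε, hv₀]; simp only [hs]; rw [if_neg (by linarith)]; ring
      have hsub : (Finset.univ.filter fun v => ¬(φ' v = 0 ∨ φ' v = 1/2 ∨ φ' v = 1))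
          ⊆ (Finset.univ.filter fun v => ¬(φ v = 0 ∨ φ v = 1/2 ∨ φ v = 1)) := by
        intro v hv
        simp only [Finset.mem_filter, Finset.mem_univ, true_and] at hv ⊢
        by_contra hvh
        have hvAB := notAB v hvh
        have hvA : v ∉ A := fun h => hvAB (Finset.mem_union_left _ h)
        have hvB : v ∉ B := fun h => hvAB (Finset.mem_union_right _ h)
        have : φ' v = φ v := by simp only [hφ'def, if_neg hvA, if_neg hvB]
        rw [this] at hv
        exact hv hvh
      have hlt : (Finset.univ.filter fun v => ¬(φ' v = 0 ∨ φ' v = 1/2 ∨ φ' v = 1)).card ≤ n := by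
        have hv₀old : v₀ ∈ (Finset.univ.filter fun v => ¬(φ v = 0 ∨ φ v = 1/2 ∨ φ v = 1)) := by
          rw [hABeq]; exact hv₀m
        have hv₀new : v₀ ∉ (Finset.univ.filter fun v => ¬(φ' v = 0 ∨ φ' v = 1/2 ∨ φ' v = 1)) := by
          simp only [Finset.mem_filter, Finset.mem_univ, true_and, not_not]
          exact hv₀half
        have := Finset.card_lt_card ((Finset.ssubset_iff_of_subset hsub).2 ⟨v₀, hv₀old, hv₀new⟩)
        omega
      obtain ⟨ψ, hψ1, hψ2, hψ3⟩ := ih φ' ⟨bdd, edge⟩ hlt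
      refine ⟨ψ, hψ1, hψ2, le_trans ?_ hψ3⟩
      have hsum : ∑ v, φ' v = (∑ v, φ v) + (ε * B.card - ε * A.card) := by
        refine sum_perturb φ φ' B A hd.symm ε ?_ ?_ ?_
        · intro v hv; simp only [hφ'def, if_pos hv]
        · intro v hv
          simp only [hφ'def, if_neg (Finset.disjoint_left.1 hd hv), if_pos hv]
        · intro v hv1 hv2; simp only [hφ'def, if_neg hv1, if_neg hv2]
      rw [hsum]
      have hcc : (A.card : ℝ) ≤ B.card := Nat.cast_le.2 hcard.le
      have := mul_le_mul_of_nonneg_left hcc hεpos.le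
      linarith

private lemma cval_half : ∀ i : Fin 3, (![0, 1/2, 1] : Fin 3 → ℝ) i = 0 ∨
    (![0, 1/2, 1] : Fin 3 → ℝ) i = 1/2 ∨ (![0, 1/2, 1] : Fin 3 → ℝ) i = 1 := by
  intro i
  fin_cases i <;> norm_num

/-- Nemhauser–Trotter: some optimal fractional independence weighting is half-integral. -/
theorem stmt_0 {V : Type*} [Fintype V] (G : SimpleGraph V) :
    ∃ φ : V → ℝ, IsFIW G φ ∧ (∑ v, φ v) = fracIndepNum G ∧
      ∀ v, φ v = 0 ∨ φ v = 1 / 2 ∨ φ v = 1 := by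
  classical
  set c : Fin 3 → ℝ := ![0, 1/2, 1] with hc
  set F : Finset (V → Fin 3) := Finset.univ.filter (fun f => IsFIW G (fun v => c (f v)))
    with hF
  have hFne : F.Nonempty := by
    refine ⟨fun _ => 0, ?_⟩
    simp only [hF, Finset.mem_filter, Finset.mem_univ, true_and]
    constructor
    · intro v; simp [hc]
    · intro u w _; simp [hc]
  set T : Finset ℝ := F.image (fun f => ∑ v, c (f v)) with hT
  have hTne : T.Nonempty := hFne.image _
  set M := T.max' hTne with hM
  obtain ⟨f₀, hf₀F, hf₀⟩ := Finset.mem_image.1 (T.max'_mem hTne)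
  have hf₀FIW : IsFIW G (fun v => c (f₀ v)) := (Finset.mem_filter.1 hf₀F).2
  -- M is an upper bound for the whole feasible set
  have hub : ∀ x ∈ {s : ℝ | ∃ φ : V → ℝ, IsFIW G φ ∧ s = ∑ v, φ v}, x ≤ M := by
    rintro x ⟨φ, hφ, rfl⟩
    obtain ⟨ψ, hψ1, hψ2, hψ3⟩ := exists_half_integral G
      (Finset.univ.filter fun v => ¬(φ v = 0 ∨ φ v = 1/2 ∨ φ v = 1)).card φ hφ le_rfl
    -- encode ψ as a Fin 3 valued function
    set g : V → Fin 3 := fun v => if ψ v = 0 then 0 else if ψ v = 1/2 then 1 else 2 with hg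
    have hgψ : ∀ v, c (g v) = ψ v := by
      intro v
      rcases hψ2 v with h | h | h <;> norm_num [hg, h, hc, Matrix.cons_val_two, Matrix.tail_cons, Matrix.head_cons]
    have hgF : g ∈ F := by
      simp only [hF, Finset.mem_filter, Finset.mem_univ, true_and]
      constructor
      · intro v
        show 0 ≤ c (g v) ∧ c (g v) ≤ 1
        rw [hgψ v]; exact hψ1.1 v
      · intro u w huw
        show c (g u) + c (g w) ≤ 1
        rw [hgψ u, hgψ w]; exact hψ1.2 u w huw
    have hmem : (∑ v, c (g v)) ∈ T := Finset.mem_image_of_mem _ hgF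
    have hle := T.le_max' _ hmem
    calc ∑ v, φ v ≤ ∑ v, ψ v := hψ3
      _ = ∑ v, c (g v) := by rw [Finset.sum_congr rfl (fun v _ => (hgψ v).symm)]
      _ ≤ M := hle
  have hMmem : M ∈ {s : ℝ | ∃ φ : V → ℝ, IsFIW G φ ∧ s = ∑ v, φ v} :=
    ⟨fun v => c (f₀ v), hf₀FIW, hf₀.symm⟩
  have hsup : fracIndepNum G = M := by
    rw [fracIndepNum]
    apply le_antisymm
    · exact csSup_le ⟨M, hMmem⟩ hub
    · exact le_csSup ⟨M, hub⟩ hMmem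
  refine ⟨fun v => c (f₀ v), hf₀FIW, ?_, fun v => cval_half (f₀ v)⟩
  rw [hsup, hf₀]
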